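/- Let (W, R) be a reflexive, transitive and strongly convergent frame, let D be a nonempty set (the constant domain), and for each a ∈ D let P(a) : W → Prop be a family of propositions. Define the belief modality [B]φ at w as: for all u with w R_B u, φ holds at u (where w R_B u iff every R-successor of w relates to u via R). Then for any d ∈ D and any w ∈ W: if for all u with w R_B u, P(d) holds at u, then for all v with w R_B v, the formula [K^MS_FS] holds at v, where [K^MS_FS] holds at a world x iff (i) there exists a ∈ D such that P(a) holds at all R-successors of x, and (ii) for all b ∈ D, if P(b) holds at all R_B-successors of x, then P(b) holds at x. (This is the validity of the axiom BtoBK_wh: [B]φ[y/x] → [B][K^MS_FS]^x φ.) -/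
import Mathlib

def RB {W : Type*} (R : W → W → Prop) (w u : W) : Prop := ∀ v, R w v → R v u

theorem BtoBKwh_valid {W : Type*} [Nonempty W] {D : Type*} [Nonempty D]
    (R : W → W → Prop) (P : D → W → Prop)
    (hrefl : ∀ w, R w w) (htrans : ∀ w v u, R w v → R v u → R w u)
    (hconv : ∀ w, ∃ u, ∀ v, R w v → R v u)
    (d : D) (w : W)
    (hB : ∀ u, RB R w u → P d u) :
    ∀ v, RB R w v →
      ((∃ a, ∀ x, R v x → P a x) ∧ (∀ b, (∀ u, RB R v u → P b u) → P b v)) := by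
  intro v hv
  constructor
  · exact ⟨d, fun x hvx => hB x (fun t hwt => htrans t v x (hv t hwt) hvx)⟩
  · intro b hb
    exact hb v (fun t hvt => hv t (htrans w v t (hv w (hrefl w)) hvt))
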